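/- Three-process setting with H(Q) = H×H×H endowed with ⟨h,h'⟩_{H(Q)} = ⟨h, Q⁻¹h'⟩_0 where Q is the 3×3 block operator with identity diagonal and off-diagonal blocks C_{ij} (C_{ji} = C_{ij}*), assumed invertible. Let M1 = {(f1, C21 f1, C31 f1)} and M2 = {(C12 f2, f2, C32 f2)}. Then for h = (C12 f2, f2, C32 f2) ∈ M2, the orthogonal projection of h onto M1 in H(Q) is (C12 f2, C21 C12 f2, C31 C12 f2), and h − P_{M1} h = (0, (I − C21 C12) f2, (C32 − C31 C12) f2). -/

import Mathlib

open scoped RealInnerProductSpace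
open ContinuousLinearMap

/-- The element of `H₀ = H × H × H` (ℓ² product structure) with the given components. -/
noncomputable def mk3 {H : Type*} (a b c : H) : PiLp 2 (fun _ : Fin 3 => H) :=
  (WithLp.equiv 2 (Fin 3 → H)).symm ![a, b, c]

/-- The `i`-th component. -/
noncomputable def cmp3 {H : Type*} (i : Fin 3) (p : PiLp 2 (fun _ : Fin 3 => H)) : H :=
  (WithLp.equiv 2 (Fin 3 → H)) p i

lemma cmp3_mk3 {H : Type*} (a b c : H) (i : Fin 3) :
    cmp3 i (mk3 a b c) = ![a, b, c] i := rfl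

lemma mk3_sub {H : Type*} [AddCommGroup H] (a b c a' b' c' : H) :
    (mk3 a b c : PiLp 2 (fun _ : Fin 3 => H)) - mk3 a' b' c'
      = mk3 (a - a') (b - b') (c - c') := by
  ext i
  fin_cases i <;> rfl

lemma inner_mk3 {H : Type*} [NormedAddCommGroup H] [InnerProductSpace ℝ H]
    (a b c a' b' c' : H) :
    ⟪(mk3 a b c : PiLp 2 (fun _ : Fin 3 => H)), mk3 a' b' c'⟫
      = ⟪a, a'⟫ + ⟪b, b'⟫ + ⟪c, c'⟫ := by
  simp [mk3, PiLp.inner_apply, Fin.sum_univ_three]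

/-- Proposition A.7: in the three-process space `H(Q)` with inner product `⟪h, Q⁻¹ h'⟫₀`,
for `h = (C12 f2, f2, C32 f2) ∈ M2` the orthogonal projection of `h` onto
`M1 = {(f1, C21 f1, C31 f1)}` is `(C12 f2, C21 C12 f2, C31 C12 f2)`, and
`h − P_{M1} h = (0, (I − C21 C12) f2, (C32 − C31 C12) f2)`. -/
theorem three_process_projection_onto_M1
    {H : Type*} [NormedAddCommGroup H] [InnerProductSpace ℝ H] [CompleteSpace H]
    (C12 C13 C23 : H →L[ℝ] H)
    (Q Qinv : PiLp 2 (fun _ : Fin 3 => H) →L[ℝ] PiLp 2 (fun _ : Fin 3 => H))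
    (hQ : ∀ p : PiLp 2 (fun _ : Fin 3 => H),
      Q p = mk3
        (cmp3 0 p + C12 (cmp3 1 p) + C13 (cmp3 2 p))
        (ContinuousLinearMap.adjoint C12 (cmp3 0 p) + cmp3 1 p + C23 (cmp3 2 p))
        (ContinuousLinearMap.adjoint C13 (cmp3 0 p)
          + ContinuousLinearMap.adjoint C23 (cmp3 1 p) + cmp3 2 p))
    (hQQi : Q ∘L Qinv = 1) (hQiQ : Qinv ∘L Q = 1) :
    ∀ f2 : H,
      (∀ f1 : H,
        ⟪mk3 (C12 f2) f2 (ContinuousLinearMap.adjoint C23 f2)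
            - mk3 (C12 f2) (ContinuousLinearMap.adjoint C12 (C12 f2))
                (ContinuousLinearMap.adjoint C13 (C12 f2)),
          Qinv (mk3 f1 (ContinuousLinearMap.adjoint C12 f1)
            (ContinuousLinearMap.adjoint C13 f1))⟫ = 0) ∧
      mk3 (C12 f2) f2 (ContinuousLinearMap.adjoint C23 f2)
          - mk3 (C12 f2) (ContinuousLinearMap.adjoint C12 (C12 f2))
              (ContinuousLinearMap.adjoint C13 (C12 f2))
        = mk3 0 (f2 - ContinuousLinearMap.adjoint C12 (C12 f2))
            (ContinuousLinearMap.adjoint C23 f2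
              - ContinuousLinearMap.adjoint C13 (C12 f2)) := by
  intro f2
  refine ⟨fun f1 => ?_, by rw [mk3_sub]; simp⟩
  have hQm : Q (mk3 f1 0 0) = mk3 f1 (ContinuousLinearMap.adjoint C12 f1)
      (ContinuousLinearMap.adjoint C13 f1) := by
    rw [hQ]
    simp [cmp3_mk3]
  have hinv : Qinv (mk3 f1 (ContinuousLinearMap.adjoint C12 f1)
      (ContinuousLinearMap.adjoint C13 f1)) = mk3 f1 0 0 := by
    rw [← hQm]
    have := congrArg (fun T => T (mk3 f1 0 0)) hQiQ
    simpa using this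
  rw [hinv, mk3_sub]
  simp only [sub_self]
  rw [inner_mk3]
  simp
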